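/- Let (m_k)_{k≥0} be a real sequence with m_0 = 1, let (a_k) and (W_n) be as in the context, and set b_n = Σ_{k=0}^n (n choose k)·k·m_k·a_{n−k}. Then W_0 = 1, W_1 = x − m_1, and for every n ≥ 2 the polynomial identity W_n(x) = (x − m_1)·W_{n−1}(x) − (1/n)·Σ_{k=0}^{n−2} (n choose k)·b_{n−k}·W_k(x) holds in ℝ[x]. -/

import Mathlib

open Finset Polynomial

/-- Trinomial revision: `C(s,i)·C(s-i,j) = C(s,j)·C(s-j,i)` when `i+j ≤ s`. -/
lemma trin_aux (s i j : ℕ) (hij : i + j ≤ s) :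
    (s.choose i : ℝ) * ((s - i).choose j : ℝ) = (s.choose j : ℝ) * ((s - j).choose i : ℝ) := by
  have h1 := Nat.choose_mul (n := s) (Nat.le_add_right i j)
  have h2 := Nat.choose_mul (n := s) (Nat.le_add_left j i)
  rw [Nat.add_sub_cancel_left] at h1
  rw [Nat.add_sub_cancel] at h2
  have h3 : (i + j).choose i = (i + j).choose j := by
    rw [← Nat.choose_symm (Nat.le_add_left j i)]
    congr 1
    omega
  rw [h3] at h1
  exact_mod_cast h1.symm.trans h2

/-- With `(a k)` defined from `(m k)` by `a 0 = 1` and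
`∑_{k≤n} (n choose k) m k a (n-k) = 0` for `n ≥ 1`, the Wick polynomials
`W n = ∑_{k≤n} (n choose k) a k x^(n-k)` satisfy the recurrence
`W 0 = 1`, `W 1 = x - m 1`, and for `n ≥ 2`,
`W n = (x - m 1)·W (n-1) - (1/n)·∑_{k=0}^{n-2} (n choose k) b (n-k) W k`,
where `b n = ∑_{k≤n} (n choose k) k m k a (n-k)`. -/
theorem stmt_7 (m : ℕ → ℝ) (hm0 : m 0 = 1)
    (a : ℕ → ℝ) (ha0 : a 0 = 1)
    (ha : ∀ n : ℕ, 1 ≤ n →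
      ∑ k ∈ Finset.range (n + 1), (n.choose k : ℝ) * m k * a (n - k) = 0)
    (W : ℕ → Polynomial ℝ)
    (hW : ∀ n, W n =
      ∑ k ∈ Finset.range (n + 1),
        Polynomial.C ((n.choose k : ℝ) * a k) * Polynomial.X ^ (n - k))
    (b : ℕ → ℝ)
    (hb : ∀ n, b n =
      ∑ k ∈ Finset.range (n + 1), (n.choose k : ℝ) * k * m k * a (n - k)) :
    W 0 = 1 ∧
    W 1 = Polynomial.X - Polynomial.C (m 1) ∧
    ∀ n : ℕ, 2 ≤ n →
      W n = (Polynomial.X - Polynomial.C (m 1)) * W (n - 1) -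
        Polynomial.C (1 / (n : ℝ)) *
          ∑ k ∈ Finset.range (n - 1),
            Polynomial.C ((n.choose k : ℝ) * b (n - k)) * W k := by
  -- the convolution identity in ite form
  have hc : ∀ r : ℕ,
      (∑ t ∈ Finset.range (r + 1), (r.choose t : ℝ) * m t * a (r - t)) =
        if r = 0 then 1 else 0 := by
    intro r
    rcases Nat.eq_zero_or_pos r with h | h
    · subst h; simp [hm0, ha0]
    · rw [if_neg (by omega), ha r h]
  -- reflected convolution identity
  have hc' : ∀ r : ℕ,
      (∑ t ∈ Finset.range (r + 1), (r.choose t : ℝ) * a t * m (r - t)) =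
        if r = 0 then 1 else 0 := by
    intro r
    rw [← hc r, ← Finset.sum_range_reflect (fun t => (r.choose t : ℝ) * m t * a (r - t)) (r + 1)]
    refine Finset.sum_congr rfl fun t ht => ?_
    simp only [Finset.mem_range] at ht
    have h1 : t ≤ r := by omega
    rw [Nat.add_sub_cancel, Nat.choose_symm h1, Nat.sub_sub_self h1]
    ring
  have hb0 : b 0 = 0 := by simp [hb]
  have hb1 : b 1 = m 1 := by
    rw [hb]
    simp [Finset.sum_range_succ, ha0]
  -- b in terms of the "derivative index on a" side
  have hbneg : ∀ r : ℕ,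
      b r = -∑ j ∈ Finset.range (r + 1),
        (r.choose j : ℝ) * ((j : ℝ) * a j) * m (r - j) := by
    intro r
    have refl1 : ∑ j ∈ Finset.range (r + 1), (r.choose j : ℝ) * ((j : ℝ) * a j) * m (r - j)
        = ∑ t ∈ Finset.range (r + 1), (r.choose t : ℝ) * (((r - t : ℕ) : ℝ) * m t * a (r - t)) := by
      rw [← Finset.sum_range_reflect]
      refine Finset.sum_congr rfl fun t ht => ?_
      simp only [Finset.mem_range] at ht
      have h1 : t ≤ r := by omega
      rw [Nat.add_sub_cancel, Nat.choose_symm h1, Nat.sub_sub_self h1]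
      ring
    have hsum : b r + ∑ t ∈ Finset.range (r + 1),
        (r.choose t : ℝ) * (((r - t : ℕ) : ℝ) * m t * a (r - t)) = 0 := by
      rw [hb r, ← Finset.sum_add_distrib]
      have : ∀ t ∈ Finset.range (r + 1),
          (r.choose t : ℝ) * t * m t * a (r - t) +
            (r.choose t : ℝ) * (((r - t : ℕ) : ℝ) * m t * a (r - t)) =
          (r : ℝ) * ((r.choose t : ℝ) * m t * a (r - t)) := by
        intro t ht
        simp only [Finset.mem_range] at ht
        have h1 : t ≤ r := by omega
        have h2 : ((r - t : ℕ) : ℝ) = (r : ℝ) - (t : ℝ) := by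
          push_cast [h1]; ring
        rw [h2]; ring
      rw [Finset.sum_congr rfl this, ← Finset.mul_sum, hc r]
      rcases Nat.eq_zero_or_pos r with h | h
      · subst h; simp
      · rw [if_neg (by omega), mul_zero]
    rw [refl1]
    linarith
  -- the key scalar identity
  have key : ∀ s : ℕ,
      ∑ i ∈ Finset.range (s + 1), (s.choose i : ℝ) * b (s - i) * a i
        = -((s : ℝ) * a s) := by
    intro s
    have step1 : ∑ i ∈ Finset.range (s + 1), (s.choose i : ℝ) * b (s - i) * a i
        = -∑ i ∈ Finset.range (s + 1), ∑ j ∈ Finset.range (s - i + 1),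
            ((s.choose i : ℝ) * (((s - i).choose j : ℝ)) *
              (((j : ℝ) * a j) * (m ((s - i) - j) * a i))) := by
      rw [← Finset.sum_neg_distrib]
      refine Finset.sum_congr rfl fun i hi => ?_
      rw [hbneg (s - i), mul_neg, neg_mul]
      congr 1
      rw [Finset.mul_sum, Finset.sum_mul]
      exact Finset.sum_congr rfl fun j hj => by ring
    rw [step1]
    have step2 : ∑ i ∈ Finset.range (s + 1), ∑ j ∈ Finset.range (s - i + 1),
            ((s.choose i : ℝ) * (((s - i).choose j : ℝ)) *
              (((j : ℝ) * a j) * (m ((s - i) - j) * a i)))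
        = ∑ j ∈ Finset.range (s + 1), ∑ i ∈ Finset.range (s - j + 1),
            ((s.choose i : ℝ) * (((s - i).choose j : ℝ)) *
              (((j : ℝ) * a j) * (m ((s - i) - j) * a i))) := by
      refine Finset.sum_comm' ?_
      intro i j
      simp only [Finset.mem_range]
      omega
    rw [step2]
    have step3 : ∀ j ∈ Finset.range (s + 1),
        ∑ i ∈ Finset.range (s - j + 1),
            ((s.choose i : ℝ) * (((s - i).choose j : ℝ)) *
              (((j : ℝ) * a j) * (m ((s - i) - j) * a i)))
        = ((j : ℝ) * a j) * ((s.choose j : ℝ) * (if s - j = 0 then 1 else 0)) := by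
      intro j hj
      simp only [Finset.mem_range] at hj
      have : ∑ i ∈ Finset.range (s - j + 1),
            ((s.choose i : ℝ) * (((s - i).choose j : ℝ)) *
              (((j : ℝ) * a j) * (m ((s - i) - j) * a i)))
          = ((j : ℝ) * a j) * ((s.choose j : ℝ) *
              (∑ i ∈ Finset.range ((s - j) + 1),
                ((s - j).choose i : ℝ) * a i * m ((s - j) - i))) := by
        rw [Finset.mul_sum, Finset.mul_sum]
        refine Finset.sum_congr rfl fun i hi => ?_
        simp only [Finset.mem_range] at hi
        have hij : i + j ≤ s := by omega
        rw [trin_aux s i j hij]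
        have hm : (s - i) - j = (s - j) - i := by omega
        rw [hm]
        ring
      rw [this, hc' (s - j)]
    rw [Finset.sum_congr rfl step3]
    rw [Finset.sum_eq_single_of_mem s (Finset.self_mem_range_succ s)]
    · simp
    · intro j hj hne
      simp only [Finset.mem_range] at hj
      rw [if_neg (by omega), mul_zero, mul_zero]
  -- coefficients of W
  have coeffW : ∀ N d : ℕ, (W N).coeff d =
      if d ≤ N then (N.choose d : ℝ) * a (N - d) else 0 := by
    intro N d
    rw [hW N, Polynomial.finset_sum_coeff]
    simp only [Polynomial.coeff_C_mul, Polynomial.coeff_X_pow]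
    by_cases hd : d ≤ N
    · rw [if_pos hd, Finset.sum_eq_single_of_mem (N - d) (by simp only [Finset.mem_range]; omega)]
      · rw [if_pos (by omega), Nat.choose_symm hd, mul_one]
      · intro k hk hne
        simp only [Finset.mem_range] at hk
        rw [if_neg (by omega), mul_zero]
    · rw [if_neg hd]
      refine Finset.sum_eq_zero fun k hk => ?_
      simp only [Finset.mem_range] at hk
      rw [if_neg (by omega), mul_zero]
  -- the star identity at the polynomial level
  have star : ∀ n : ℕ,
      (∑ k ∈ Finset.range (n + 1),
          Polynomial.C ((k : ℝ) * (n.choose k : ℝ) * a k) * Polynomial.X ^ (n - k))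
      = -∑ k ∈ Finset.range (n + 1),
          Polynomial.C ((n.choose k : ℝ) * b (n - k)) * W k := by
    intro n
    apply Polynomial.ext
    intro d
    rw [Polynomial.coeff_neg, Polynomial.finset_sum_coeff, Polynomial.finset_sum_coeff]
    simp only [Polynomial.coeff_C_mul, Polynomial.coeff_X_pow, coeffW]
    by_cases hd : d ≤ n
    · have lhs : ∑ k ∈ Finset.range (n + 1),
          (k : ℝ) * (n.choose k : ℝ) * a k * (if d = n - k then 1 else 0)
          = ((n - d : ℕ) : ℝ) * (n.choose d : ℝ) * a (n - d) := by
        rw [Finset.sum_eq_single_of_mem (n - d) (by simp only [Finset.mem_range]; omega)]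
        · rw [if_pos (by omega), Nat.choose_symm hd, mul_one]
        · intro k hk hne
          simp only [Finset.mem_range] at hk
          rw [if_neg (by omega), mul_zero]
      rw [lhs]
      have rhs : ∑ k ∈ Finset.range (n + 1),
          (n.choose k : ℝ) * b (n - k) *
            (if d ≤ k then (k.choose d : ℝ) * a (k - d) else 0)
          = (n.choose d : ℝ) * (-(((n - d : ℕ) : ℝ) * a (n - d))) := by
        rw [show n + 1 = d + (n - d + 1) by omega, Finset.sum_range_add]
        rw [Finset.sum_eq_zero (fun k hk => by
          simp only [Finset.mem_range] at hk
          rw [if_neg (by omega), mul_zero]), zero_add]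
        have : ∀ i ∈ Finset.range (n - d + 1),
            (n.choose (d + i) : ℝ) * b (n - (d + i)) *
              (if d ≤ d + i then ((d + i).choose d : ℝ) * a (d + i - d) else 0)
            = (n.choose d : ℝ) *
                (((n - d).choose i : ℝ) * b ((n - d) - i) * a i) := by
          intro i hi
          simp only [Finset.mem_range] at hi
          rw [if_pos (Nat.le_add_right d i), Nat.add_sub_cancel_left]
          have h1 : (n.choose (d + i) : ℝ) * ((d + i).choose d : ℝ)
              = (n.choose d : ℝ) * ((n - d).choose i : ℝ) := by
            have := Nat.choose_mul (n := n) (Nat.le_add_right d i)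
            rw [Nat.add_sub_cancel_left] at this
            exact_mod_cast this
          have h2 : n - (d + i) = (n - d) - i := by omega
          rw [h2]
          calc (n.choose (d + i) : ℝ) * b (n - d - i) * (((d + i).choose d : ℝ) * a i)
              = ((n.choose (d + i) : ℝ) * ((d + i).choose d : ℝ)) * (b (n - d - i) * a i) := by
                ring
            _ = ((n.choose d : ℝ) * ((n - d).choose i : ℝ)) * (b (n - d - i) * a i) := by
                rw [h1]
            _ = (n.choose d : ℝ) * (((n - d).choose i : ℝ) * b ((n - d) - i) * a i) := by
                ring
        rw [Finset.sum_congr rfl this, ← Finset.mul_sum, key (n - d)]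
      rw [rhs]
      ring
    · rw [Finset.sum_eq_zero (fun k hk => by
        simp only [Finset.mem_range] at hk
        rw [if_neg (by omega), mul_zero])]
      rw [Finset.sum_eq_zero (fun k hk => by
        simp only [Finset.mem_range] at hk
        rw [if_neg (by omega), mul_zero]), neg_zero]
  -- W 0 and W 1
  have hW0 : W 0 = 1 := by
    rw [hW 0]
    simp [ha0]
  have ha1 : a 1 = -m 1 := by
    have h := ha 1 le_rfl
    simp [Finset.sum_range_succ, hm0, ha0] at h
    linarith
  have hW1 : W 1 = Polynomial.X - Polynomial.C (m 1) := by
    rw [hW 1]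
    rw [Finset.sum_range_succ, Finset.sum_range_succ]
    simp [ha0, ha1, sub_eq_add_neg]
  refine ⟨hW0, hW1, ?_⟩
  intro n hn
  have hn0 : (n : ℝ) ≠ 0 := by positivity
  -- split star sum
  have hsplit : ∑ k ∈ Finset.range (n - 1),
        Polynomial.C ((n.choose k : ℝ) * b (n - k)) * W k
      = -(∑ k ∈ Finset.range (n + 1),
          Polynomial.C ((k : ℝ) * (n.choose k : ℝ) * a k) * Polynomial.X ^ (n - k))
        - Polynomial.C ((n : ℝ) * m 1) * W (n - 1) := by
    have e1 : ∑ k ∈ Finset.range (n + 1),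
        Polynomial.C ((n.choose k : ℝ) * b (n - k)) * W k
        = ∑ k ∈ Finset.range (n - 1),
            Polynomial.C ((n.choose k : ℝ) * b (n - k)) * W k
          + Polynomial.C ((n : ℝ) * m 1) * W (n - 1) := by
      rw [show n + 1 = (n - 1) + 1 + 1 by omega, Finset.sum_range_succ, Finset.sum_range_succ]
      have h1 : n - 1 + 1 = n := by omega
      rw [h1, Nat.sub_self, hb0, mul_zero, Polynomial.C_0, zero_mul, add_zero]
      have h2 : n - (n - 1) = 1 := by omega
      rw [h2, hb1]
      have h3 : (n.choose (n - 1) : ℝ) = (n : ℝ) := by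
        have : n.choose (n - 1) = n := by
          rw [← Nat.choose_symm (show n - 1 ≤ n by omega), h2, Nat.choose_one_right]
        exact_mod_cast this
      rw [h3]
    have e2 := star n
    rw [e1] at e2
    -- e2 : ∑ ... X-sum = -(S + C(n m1) W(n-1))
    rw [e2]
    ring
  rw [hsplit]
  have hCC : Polynomial.C (1 / (n : ℝ)) * Polynomial.C ((n : ℝ) * m 1) = Polynomial.C (m 1) := by
    rw [← Polynomial.C_mul]
    congr 1
    field_simp
  -- remaining: W n = X * W (n-1) + C(1/n) * ∑ C(k C(n,k) a k) X^(n-k)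
  have hXW : Polynomial.X * W (n - 1)
      = ∑ k ∈ Finset.range (n + 1),
          Polynomial.C (((n - 1).choose k : ℝ) * a k) * Polynomial.X ^ (n - k) := by
    rw [hW (n - 1), Finset.mul_sum]
    have hz : (n - 1).choose (n - 1 + 1) = 0 := Nat.choose_eq_zero_of_lt (by omega)
    have hsucc : ∑ k ∈ Finset.range (n + 1),
          Polynomial.C (((n - 1).choose k : ℝ) * a k) * Polynomial.X ^ (n - k)
        = ∑ k ∈ Finset.range (n - 1 + 1),
            Polynomial.C (((n - 1).choose k : ℝ) * a k) * Polynomial.X ^ (n - k) := by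
      rw [show n + 1 = (n - 1 + 1) + 1 by omega, Finset.sum_range_succ, hz]
      simp only [Nat.cast_zero, zero_mul, Polynomial.C_0, add_zero]
    rw [hsucc]
    refine Finset.sum_congr rfl fun k hk => ?_
    simp only [Finset.mem_range] at hk
    have he : n - k = (n - 1 - k) + 1 := by omega
    rw [he, pow_succ]
    ring
  have hmain : W n = Polynomial.X * W (n - 1)
      + Polynomial.C (1 / (n : ℝ)) *
          ∑ k ∈ Finset.range (n + 1),
            Polynomial.C ((k : ℝ) * (n.choose k : ℝ) * a k) * Polynomial.X ^ (n - k) := by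
    rw [hXW, hW n, Finset.mul_sum, ← Finset.sum_add_distrib]
    refine Finset.sum_congr rfl fun k hk => ?_
    simp only [Finset.mem_range] at hk
    have hnat : ((n - 1).choose k) * n = n.choose k * (n - k) := by
      have := Nat.choose_mul_succ_eq (n - 1) k
      rw [show n - 1 + 1 = n by omega] at this
      exact this
    have hreal : ((n - 1).choose k : ℝ) * (n : ℝ) = (n.choose k : ℝ) * ((n : ℝ) - (k : ℝ)) := by
      have h1 : (((n - 1).choose k * n : ℕ) : ℝ) = ((n.choose k * (n - k) : ℕ) : ℝ) := by
        exact_mod_cast congrArg (Nat.cast : ℕ → ℝ) hnat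
      push_cast [show k ≤ n by omega] at h1
      exact_mod_cast h1
    have hck : (n.choose k : ℝ) * a k
        = ((n - 1).choose k : ℝ) * a k + (1 / (n : ℝ)) * ((k : ℝ) * (n.choose k : ℝ) * a k) := by
      have : ((n - 1).choose k : ℝ) = (n.choose k : ℝ) - (k : ℝ) * (n.choose k : ℝ) / (n : ℝ) := by
        field_simp
        linarith [hreal]
      rw [this]
      field_simp
      ring
    rw [hck, Polynomial.C_add]
    simp only [Polynomial.C_mul]
    ring
  rw [hmain]
  linear_combination (-(W (n - 1))) * hCC
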